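/- Define recursively n₁ = 0 and n_{k+1} = 2^{n_k} + 1, and let y_n = 2^{-n_k} for n ∈ [n_k, n_{k+1}). Then for every α > 0, inf_{n ∈ ℕ} y_n · n^α = 0; hence the upper decay rate of (y_n) is infinite. -/

import Mathlib

open Filter

/-- The sequence `n₁ = 0`, `n_{k+1} = 2^{n_k} + 1` (here `nk 0 = 0`). -/
def nk : ℕ → ℕ
  | 0 => 0
  | k + 1 => 2 ^ nk k + 1

lemma nk_lt (k : ℕ) : nk k < nk (k + 1) := by
  show nk k < 2 ^ nk k + 1
  have := @Nat.lt_two_pow_self (nk k)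
  omega

lemma nk_ge (k : ℕ) : k ≤ nk k := by
  induction k with
  | zero => simp [nk]
  | succ k ih => have := nk_lt k; omega

lemma nk_exists (n : ℕ) : ∃ k, nk k ≤ n ∧ n < nk (k + 1) := by
  classical
  have hne : ∃ k, n < nk (k + 1) :=
    ⟨n, lt_of_lt_of_le (Nat.lt_succ_self n) (nk_ge (n + 1))⟩
  refine ⟨Nat.find hne, ?_, Nat.find_spec hne⟩
  rcases Nat.eq_zero_or_pos (Nat.find hne) with h | h
  · rw [h]; show nk 0 ≤ n; simp [nk]
  · have h1 : Nat.find hne - 1 + 1 = Nat.find hne := Nat.succ_pred_eq_of_pos h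
    have := Nat.find_min hne (show Nat.find hne - 1 < Nat.find hne by omega)
    rw [h1] at this
    omega

lemma key (y : ℕ → ℝ)
    (hy : ∀ k n : ℕ, nk k ≤ n → n < nk (k + 1) → y n = (2 : ℝ) ^ (-(nk k : ℝ)))
    (a : ℝ) (ha : 0 ≤ a) :
    (⨅ n : ℕ, y (n + 1) * ((n : ℝ) + 1) ^ a) = 0 := by
  have hpos : ∀ n : ℕ, 0 < y (n + 1) := by
    intro n
    obtain ⟨k, h1, h2⟩ := nk_exists (n + 1)
    rw [hy k (n + 1) h1 h2]
    positivity
  have hnonneg : ∀ n : ℕ, 0 ≤ y (n + 1) * ((n : ℝ) + 1) ^ a := fun n =>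
    mul_nonneg (hpos n).le (Real.rpow_nonneg (by positivity) a)
  have hbdd : BddBelow (Set.range fun n : ℕ => y (n + 1) * ((n : ℝ) + 1) ^ a) := by
    refine ⟨0, ?_⟩
    rintro x ⟨n, rfl⟩
    exact hnonneg n
  refine le_antisymm ?_ (le_ciInf hnonneg)
  -- the comparison sequence
  set b := ⌈a⌉₊ with hb
  have hyval : ∀ k : ℕ, y (nk (k + 1)) = (2 : ℝ) ^ (-(nk (k + 1) : ℝ)) :=
    fun k => hy (k + 1) (nk (k + 1)) le_rfl (nk_lt (k + 1))
  have hF : ∀ k : ℕ,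
      (⨅ n : ℕ, y (n + 1) * ((n : ℝ) + 1) ^ a)
        ≤ (2 : ℝ) ^ (-(nk (k + 1) : ℝ)) * (nk (k + 1) : ℝ) ^ a := by
    intro k
    have h1 : nk (k + 1) - 1 + 1 = nk (k + 1) := by
      have := nk_lt k; omega
    have := ciInf_le hbdd (nk (k + 1) - 1)
    have hc : ((nk (k + 1) - 1 : ℕ) : ℝ) + 1 = (nk (k + 1) : ℝ) := by
      exact_mod_cast congrArg (Nat.cast : ℕ → ℝ) h1
    rwa [h1, hc, hyval k] at this
  -- show the comparison sequence tends to 0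
  have hg : Tendsto (fun N : ℕ => (2 : ℝ) ^ (-(N : ℝ)) * (N : ℝ) ^ a) atTop (nhds 0) := by
    have hmain : Tendsto (fun N : ℕ => (N : ℝ) ^ b / 2 ^ N) atTop (nhds 0) :=
      tendsto_pow_const_div_const_pow_of_one_lt b one_lt_two
    refine tendsto_of_tendsto_of_tendsto_of_le_of_le' tendsto_const_nhds hmain ?_ ?_
    · filter_upwards with N
      exact mul_nonneg (Real.rpow_nonneg two_pos.le _) (Real.rpow_nonneg (Nat.cast_nonneg N) a)
    · filter_upwards [eventually_ge_atTop 1] with N hN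
      have h2 : (2 : ℝ) ^ (-(N : ℝ)) = ((2 : ℝ) ^ N)⁻¹ := by
        rw [Real.rpow_neg two_pos.le, Real.rpow_natCast]
      have h3 : (N : ℝ) ^ a ≤ (N : ℝ) ^ b := by
        rw [← Real.rpow_natCast (N : ℝ) b]
        exact Real.rpow_le_rpow_of_exponent_le (by exact_mod_cast hN) (Nat.le_ceil a)
      rw [h2, mul_comm, div_eq_mul_inv]
      exact mul_le_mul_of_nonneg_right h3 (by positivity)
  have htend : Tendsto (fun k : ℕ => (2 : ℝ) ^ (-(nk (k + 1) : ℝ)) * (nk (k + 1) : ℝ) ^ a)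
      atTop (nhds 0) := by
    refine hg.comp (tendsto_atTop_mono (fun k => ?_) tendsto_id)
    exact le_trans (Nat.le_succ k) (nk_ge (k + 1))
  exact ge_of_tendsto' htend hF

/-- For the sequence `y_n = 2^{-n_k}` for `n ∈ [n_k, n_{k+1})`: for every `α > 0`
we have `inf_{n≥1} y_n n^α = 0`; hence the set `{α ≥ 0 : inf_n y_n n^α > 0}` is
empty, i.e. the upper decay rate is `+∞`. -/
theorem stmt6 (y : ℕ → ℝ)
    (hy : ∀ k n : ℕ, nk k ≤ n → n < nk (k + 1) → y n = (2 : ℝ) ^ (-(nk k : ℝ))) :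
    (∀ a : ℝ, 0 < a → (⨅ n : ℕ, y (n + 1) * ((n : ℝ) + 1) ^ a) = 0) ∧
    {a : ℝ | 0 ≤ a ∧ 0 < ⨅ n : ℕ, y (n + 1) * ((n : ℝ) + 1) ^ a} = ∅ := by
  refine ⟨fun a ha => key y hy a ha.le, ?_⟩
  ext a
  simp only [Set.mem_setOf_eq, Set.mem_empty_iff_false, iff_false, not_and]
  intro ha
  rw [key y hy a ha]
  exact lt_irrefl 0
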